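/- Let M and M̂ be symmetric PSD matrices with the same null space satisfying α M ⪯ M̂ ⪯ β M for some 0 < α ≤ β. Let b be a vector in the common image, and set x* = M† b, y* = M̂† b. Then ‖y* − x*‖_M ≤ max(|α⁻¹ − 1|, |β⁻¹ − 1|) · ‖b‖_{M†}. -/

import Mathlib

open Matrix

/-- `N` is the Moore–Penrose pseudo-inverse of `M` (Penrose conditions). -/
def IsMoorePenrose {k : ℕ} (M N : Matrix (Fin k) (Fin k) ℝ) : Prop :=
  M * N * M = M ∧ N * M * N = N ∧ (M * N)ᵀ = M * N ∧ (N * M)ᵀ = N * M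

namespace Stmt15Aux

variable {k : ℕ}

lemma ext_mulVec {A B : Matrix (Fin k) (Fin k) ℝ} (h : ∀ v, A *ᵥ v = B *ᵥ v) : A = B := by
  ext i j
  have := congrFun (h (Pi.single j 1)) i
  simpa [mulVec_single] using this

lemma dot_sym {A : Matrix (Fin k) (Fin k) ℝ} (hA : Aᵀ = A) (v w : Fin k → ℝ) :
    v ⬝ᵥ (A *ᵥ w) = (A *ᵥ v) ⬝ᵥ w := by
  nth_rewrite 1 [← hA]
  rw [dotProduct_mulVec, vecMul_transpose]

lemma dot_CS (x y : Fin k → ℝ) : (x ⬝ᵥ y) ^ 2 ≤ (x ⬝ᵥ x) * (y ⬝ᵥ y) := by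
  simpa [dotProduct, pow_two] using Finset.sum_mul_sq_le_sq_mul_sq Finset.univ x y

lemma dot_self_nonneg (x : Fin k → ℝ) : 0 ≤ x ⬝ᵥ x :=
  Finset.sum_nonneg fun i _ => mul_self_nonneg _

lemma mp_unique {M N N' : Matrix (Fin k) (Fin k) ℝ}
    (h : IsMoorePenrose M N) (h' : IsMoorePenrose M N') : N = N' := by
  obtain ⟨a1, a2, a3, a4⟩ := h
  obtain ⟨b1, b2, b3, b4⟩ := h'
  have e1 : M * N = M * N' := by
    calc M * N = ((M * N') * (M * N))ᵀ := by
          rw [← Matrix.mul_assoc (M * N') M N, b1, a3]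
      _ = (M * N)ᵀ * (M * N')ᵀ := by rw [transpose_mul]
      _ = (M * N) * (M * N') := by rw [a3, b3]
      _ = M * N' := by rw [← Matrix.mul_assoc (M * N) M N', a1]
  have e2 : N * M = N' * M := by
    calc N * M = ((N * M) * (N' * M))ᵀ := by
          rw [Matrix.mul_assoc N M (N' * M), ← Matrix.mul_assoc M N' M, b1, a4]
      _ = (N' * M)ᵀ * (N * M)ᵀ := by rw [transpose_mul]
      _ = (N' * M) * (N * M) := by rw [a4, b4]
      _ = N' * M := by rw [Matrix.mul_assoc N' M (N * M), ← Matrix.mul_assoc M N M, a1]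
  calc N = N * M * N := a2.symm
    _ = N' * M * N := by rw [e2]
    _ = N' * (M * N) := by rw [Matrix.mul_assoc]
    _ = N' * (M * N') := by rw [e1]
    _ = N' := by rw [← Matrix.mul_assoc, b2]

lemma mp_symm {M N : Matrix (Fin k) (Fin k) ℝ} (hMt : Mᵀ = M)
    (h : IsMoorePenrose M N) : Nᵀ = N := by
  obtain ⟨a1, a2, a3, a4⟩ := h
  have ht : IsMoorePenrose M Nᵀ := by
    refine ⟨?_, ?_, ?_, ?_⟩
    · have := congrArg transpose a1
      simpa [transpose_mul, hMt, Matrix.mul_assoc] using this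
    · have := congrArg transpose a2
      simpa [transpose_mul, hMt, Matrix.mul_assoc] using this
    · calc (M * Nᵀ)ᵀ = N * Mᵀ := by rw [transpose_mul, transpose_transpose]
        _ = N * M := by rw [hMt]
        _ = (N * M)ᵀ := a4.symm
        _ = Mᵀ * Nᵀ := by rw [transpose_mul]
        _ = M * Nᵀ := by rw [hMt]
    · calc (Nᵀ * M)ᵀ = Mᵀ * N := by rw [transpose_mul, transpose_transpose]
        _ = M * N := by rw [hMt]
        _ = (M * N)ᵀ := a3.symm
        _ = Nᵀ * Mᵀ := by rw [transpose_mul]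
        _ = Nᵀ * M := by rw [hMt]
  exact (mp_unique ⟨a1, a2, a3, a4⟩ ht).symm

end Stmt15Aux

set_option maxHeartbeats 1000000 in
open Stmt15Aux in
theorem stmt15 {n : ℕ} (M Mh N Nh : Matrix (Fin n) (Fin n) ℝ)
    (hM : M.PosSemidef) (hMh : Mh.PosSemidef)
    (hnull : {x : Fin n → ℝ | M *ᵥ x = 0} = {x : Fin n → ℝ | Mh *ᵥ x = 0})
    (α β : ℝ) (hα : 0 < α) (hαβ : α ≤ β)
    (hlow : (Mh - α • M).PosSemidef) (hhigh : (β • M - Mh).PosSemidef)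
    (hN : IsMoorePenrose M N) (hNh : IsMoorePenrose Mh Nh)
    (b : Fin n → ℝ) (hb : ∃ u : Fin n → ℝ, M *ᵥ u = b) :
    Real.sqrt ((Nh *ᵥ b - N *ᵥ b) ⬝ᵥ (M *ᵥ (Nh *ᵥ b - N *ᵥ b))) ≤
      max |α⁻¹ - 1| |β⁻¹ - 1| * Real.sqrt (b ⬝ᵥ (N *ᵥ b)) := by
  obtain ⟨u, hu⟩ := hb
  have hβ : 0 < β := lt_of_lt_of_le hα hαβ
  obtain ⟨a1, a2, a3, a4⟩ := hN
  obtain ⟨b1, b2, b3, b4⟩ := hNh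
  have hMt : Mᵀ = M := (by simpa using hM.1 : M.IsSymm).eq
  have hMht : Mhᵀ = Mh := (by simpa using hMh.1 : Mh.IsSymm).eq
  have hNt : Nᵀ = N := mp_symm hMt ⟨a1, a2, a3, a4⟩
  have hNht : Nhᵀ = Nh := mp_symm hMht ⟨b1, b2, b3, b4⟩
  have hcomm : M * N = N * M := by
    rw [← a3, transpose_mul, hNt, hMt]
  have hcommh : Mh * Nh = Nh * Mh := by
    rw [← b3, transpose_mul, hNht, hMht]
  set P := N * M with hPdef
  set Ph := Nh * Mh with hPhdef
  have hPt : Pᵀ = P := a4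
  have hPht : Phᵀ = Ph := b4
  have hMP : M * P = M := by rw [hPdef, ← Matrix.mul_assoc, a1]
  have hMPh : Mh * Ph = Mh := by rw [hPhdef, ← Matrix.mul_assoc, b1]
  have hker : ∀ v : Fin n → ℝ, M *ᵥ v = 0 ↔ Mh *ᵥ v = 0 := by
    intro v
    constructor <;> intro h
    · have hv : v ∈ {x : Fin n → ℝ | M *ᵥ x = 0} := h
      rw [hnull] at hv; exact hv
    · have hv : v ∈ {x : Fin n → ℝ | Mh *ᵥ x = 0} := h
      rw [← hnull] at hv; exact hv
  have hMzeroP : M * (1 - P) = 0 := by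
    rw [Matrix.mul_sub, Matrix.mul_one, hMP, sub_self]
  have hMhzeroPh : Mh * (1 - Ph) = 0 := by
    rw [Matrix.mul_sub, Matrix.mul_one, hMPh, sub_self]
  have hMhzeroP : Mh * (1 - P) = 0 := by
    apply ext_mulVec; intro v
    have h1 : M *ᵥ ((1 - P) *ᵥ v) = 0 := by
      rw [mulVec_mulVec, hMzeroP, zero_mulVec]
    have h2 := (hker _).1 h1
    rw [← mulVec_mulVec, h2, zero_mulVec]
  have hMzeroPh : M * (1 - Ph) = 0 := by
    apply ext_mulVec; intro v
    have h1 : Mh *ᵥ ((1 - Ph) *ᵥ v) = 0 := by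
      rw [mulVec_mulVec, hMhzeroPh, zero_mulVec]
    have h2 := (hker _).2 h1
    rw [← mulVec_mulVec, h2, zero_mulVec]
  have hPhP : Ph * P = Ph := by
    have h0 : Ph * (1 - P) = 0 := by
      rw [hPhdef, Matrix.mul_assoc, hMhzeroP, Matrix.mul_zero]
    rw [Matrix.mul_sub, Matrix.mul_one, sub_eq_zero] at h0
    exact h0.symm
  have hPPh : P * Ph = P := by
    have h0 : P * (1 - Ph) = 0 := by
      rw [hPdef, Matrix.mul_assoc, hMzeroPh, Matrix.mul_zero]
    rw [Matrix.mul_sub, Matrix.mul_one, sub_eq_zero] at h0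
    exact h0.symm
  have hPeq : P = Ph := by
    have t := congrArg transpose hPPh
    rw [transpose_mul, hPht, hPt] at t
    rw [← hPhP, t]
  -- square roots
  have hsq : ∀ X : Matrix (Fin n) (Fin n) ℝ, X.PosSemidef → ∃ S : Matrix (Fin n) (Fin n) ℝ,
      S * S = X ∧ Sᵀ = S := by
    intro X hX
    open scoped MatrixOrder in
    exact ⟨CFC.sqrt X, CFC.sqrt_mul_sqrt_self X hX.nonneg,
      (by simpa using (CFC.sqrt_nonneg X).posSemidef.1 : (CFC.sqrt X).IsSymm).eq⟩
  obtain ⟨S, hSS, hSt⟩ := hsq M hM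
  obtain ⟨Sh, hShSh, hSht⟩ := hsq Mh hMh
  have hkerS : ∀ v : Fin n → ℝ, M *ᵥ v = 0 → S *ᵥ v = 0 := by
    intro v hv
    have h0 : (S *ᵥ v) ⬝ᵥ (S *ᵥ v) = 0 := by
      rw [← dot_sym hSt, mulVec_mulVec, hSS, hv, dotProduct_zero]
    exact dotProduct_self_eq_zero.mp h0
  have hSP : S * P = S := by
    have h0 : S * (1 - P) = 0 := by
      apply ext_mulVec; intro v
      have h1 : M *ᵥ ((1 - P) *ᵥ v) = 0 := by
        rw [mulVec_mulVec, hMzeroP, zero_mulVec]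
      rw [← mulVec_mulVec, hkerS _ h1, zero_mulVec]
    rw [Matrix.mul_sub, Matrix.mul_one, sub_eq_zero] at h0
    exact h0.symm
  have hPS : P * S = S := by
    have t := congrArg transpose hSP
    rwa [transpose_mul, hPt, hSt] at t
  -- the operators
  set Q := S * N * S with hQdef
  set A := S * Nh * S with hAdef
  have hQt : Qᵀ = Q := by
    rw [hQdef, transpose_mul, transpose_mul, hSt, hNt, Matrix.mul_assoc]
  have hAt : Aᵀ = A := by
    rw [hAdef, transpose_mul, transpose_mul, hSt, hNht, Matrix.mul_assoc]
  set T := A - Q with hTdef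
  have hTt : Tᵀ = T := by rw [hTdef, transpose_sub, hAt, hQt]
  have hQQ : Q * Q = Q := by
    calc Q * Q = S * N * (S * S) * N * S := by
          rw [hQdef]; simp only [Matrix.mul_assoc]
      _ = S * (N * M * N) * S := by rw [hSS]; simp only [Matrix.mul_assoc]
      _ = Q := by rw [a2, hQdef]
  have qA : ∀ v : Fin n → ℝ, v ⬝ᵥ (A *ᵥ v) = (S *ᵥ v) ⬝ᵥ (Nh *ᵥ (S *ᵥ v)) := by
    intro v
    calc v ⬝ᵥ (A *ᵥ v) = v ⬝ᵥ (S *ᵥ (Nh *ᵥ (S *ᵥ v))) := by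
          rw [mulVec_mulVec, mulVec_mulVec, hAdef]
      _ = (S *ᵥ v) ⬝ᵥ (Nh *ᵥ (S *ᵥ v)) := dot_sym hSt _ _
  have qQ : ∀ v : Fin n → ℝ, v ⬝ᵥ (Q *ᵥ v) = (S *ᵥ v) ⬝ᵥ (N *ᵥ (S *ᵥ v)) := by
    intro v
    calc v ⬝ᵥ (Q *ᵥ v) = v ⬝ᵥ (S *ᵥ (N *ᵥ (S *ᵥ v))) := by
          rw [mulVec_mulVec, mulVec_mulVec, hQdef]
      _ = (S *ᵥ v) ⬝ᵥ (N *ᵥ (S *ᵥ v)) := dot_sym hSt _ _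
  -- comparison of quadratic forms of N, Nh on im M
  have comp : ∀ w : Fin n → ℝ, P *ᵥ w = w →
      β⁻¹ * (w ⬝ᵥ (N *ᵥ w)) ≤ w ⬝ᵥ (Nh *ᵥ w) ∧
        w ⬝ᵥ (Nh *ᵥ w) ≤ α⁻¹ * (w ⬝ᵥ (N *ᵥ w)) := by
    intro w hw
    set p := Nh *ᵥ w with hpdef
    set q := N *ᵥ w with hqdef
    have hwq : M *ᵥ q = w := by
      rw [hqdef, mulVec_mulVec, hcomm, hw]
    have hwp : Mh *ᵥ p = w := by
      rw [hpdef, mulVec_mulVec, hcommh, ← hPeq, hw]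
    have hsw : w ⬝ᵥ p = p ⬝ᵥ (Mh *ᵥ p) := by
      nth_rewrite 1 [← hwp]; rw [dotProduct_comm]
    have htw : w ⬝ᵥ q = q ⬝ᵥ (M *ᵥ q) := by
      nth_rewrite 1 [← hwq]; rw [dotProduct_comm]
    have hs0 : 0 ≤ w ⬝ᵥ p := by rw [hsw]; simpa using hMh.dotProduct_mulVec_nonneg p
    have ht0 : 0 ≤ w ⬝ᵥ q := by rw [htw]; simpa using hM.dotProduct_mulVec_nonneg q
    have hlowp : α * (p ⬝ᵥ (M *ᵥ p)) ≤ p ⬝ᵥ (Mh *ᵥ p) := by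
      have h0 := hlow.dotProduct_mulVec_nonneg p
      simp only [star_trivial, sub_mulVec, smul_mulVec, dotProduct_sub,
        dotProduct_smul, smul_eq_mul] at h0
      linarith
    have hhighq : q ⬝ᵥ (Mh *ᵥ q) ≤ β * (q ⬝ᵥ (M *ᵥ q)) := by
      have h0 := hhigh.dotProduct_mulVec_nonneg q
      simp only [star_trivial, sub_mulVec, smul_mulVec, dotProduct_sub,
        dotProduct_smul, smul_eq_mul] at h0
      linarith
    have hpMp : 0 ≤ p ⬝ᵥ (M *ᵥ p) := by simpa using hM.dotProduct_mulVec_nonneg p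
    have hqMhq : 0 ≤ q ⬝ᵥ (Mh *ᵥ q) := by simpa using hMh.dotProduct_mulVec_nonneg q
    have hsqp : q ⬝ᵥ (M *ᵥ p) = w ⬝ᵥ p := by rw [dot_sym hMt, hwq]
    have htpq : p ⬝ᵥ (Mh *ᵥ q) = w ⬝ᵥ q := by rw [dot_sym hMht, hwp]
    have CS1 : (q ⬝ᵥ (M *ᵥ p)) ^ 2 ≤ (q ⬝ᵥ (M *ᵥ q)) * (p ⬝ᵥ (M *ᵥ p)) := by
      have e1 : ∀ x y : Fin n → ℝ, x ⬝ᵥ (M *ᵥ y) = (S *ᵥ x) ⬝ᵥ (S *ᵥ y) := by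
        intro x y
        rw [← hSS, ← mulVec_mulVec, dot_sym hSt]
      rw [e1, e1, e1]
      exact dot_CS _ _
    have CS2 : (p ⬝ᵥ (Mh *ᵥ q)) ^ 2 ≤ (p ⬝ᵥ (Mh *ᵥ p)) * (q ⬝ᵥ (Mh *ᵥ q)) := by
      have e1 : ∀ x y : Fin n → ℝ, x ⬝ᵥ (Mh *ᵥ y) = (Sh *ᵥ x) ⬝ᵥ (Sh *ᵥ y) := by
        intro x y
        rw [← hShSh, ← mulVec_mulVec, dot_sym hSht]
      rw [e1, e1, e1]
      exact dot_CS _ _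
    constructor
    · -- lower bound : β⁻¹ * t ≤ s
      rw [inv_mul_eq_div, div_le_iff₀ hβ]
      rcases eq_or_lt_of_le ht0 with h | h
      · rw [← h]; exact mul_nonneg hs0 hβ.le
      · rw [hsqp] at CS1
        rw [htpq] at CS2
        nlinarith [hhighq, CS2, htw, hsw, h, hs0]
    · -- upper bound : s ≤ α⁻¹ * t
      rw [inv_mul_eq_div, le_div_iff₀ hα]
      rcases eq_or_lt_of_le hs0 with h | h
      · rw [← h, zero_mul]; exact ht0
      · rw [hsqp] at CS1
        nlinarith [hlowp, CS1, htw, hsw, h, ht0]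
  set m := max |α⁻¹ - 1| |β⁻¹ - 1| with hmdef
  have hm0 : 0 ≤ m := le_trans (abs_nonneg _) (le_max_left _ _)
  -- numerical radius bound
  have Hnum : ∀ v : Fin n → ℝ, |v ⬝ᵥ (T *ᵥ v)| ≤ m * (v ⬝ᵥ v) := by
    intro v
    have e1 : (Q *ᵥ v) ⬝ᵥ (Q *ᵥ v) = v ⬝ᵥ (Q *ᵥ v) := by
      rw [← dot_sym hQt v (Q *ᵥ v), mulVec_mulVec, hQQ]
    have hr0 : 0 ≤ v ⬝ᵥ (Q *ᵥ v) := by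
      rw [← e1]; exact dot_self_nonneg _
    have hr1 : v ⬝ᵥ (Q *ᵥ v) ≤ v ⬝ᵥ v := by
      have h0 : 0 ≤ (v - Q *ᵥ v) ⬝ᵥ (v - Q *ᵥ v) := dot_self_nonneg _
      have e2 : (Q *ᵥ v) ⬝ᵥ v = v ⬝ᵥ (Q *ᵥ v) := dotProduct_comm _ _
      rw [dotProduct_sub, sub_dotProduct, sub_dotProduct, e1, e2] at h0
      linarith
    have hwfix : P *ᵥ (S *ᵥ v) = S *ᵥ v := by rw [mulVec_mulVec, hPS]
    obtain ⟨clow, cup⟩ := comp (S *ᵥ v) hwfix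
    rw [← qA] at cup clow
    rw [← qQ] at cup clow
    have hTv : v ⬝ᵥ (T *ᵥ v) = v ⬝ᵥ (A *ᵥ v) - v ⬝ᵥ (Q *ᵥ v) := by
      rw [hTdef, sub_mulVec, dotProduct_sub]
    rw [abs_le]
    have h1 : α⁻¹ - 1 ≤ |α⁻¹ - 1| := le_abs_self _
    have h2 : |α⁻¹ - 1| ≤ m := le_max_left _ _
    have h3 : -|β⁻¹ - 1| ≤ β⁻¹ - 1 := neg_abs_le _
    have h4 : |β⁻¹ - 1| ≤ m := le_max_right _ _
    constructor
    · rw [hTv]; nlinarith [clow, hr0, hr1, h3, h4, hm0]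
    · rw [hTv]; nlinarith [cup, hr0, hr1, h1, h2, hm0]
  -- operator norm bound via polarization
  have opnorm : ∀ w : Fin n → ℝ, (T *ᵥ w) ⬝ᵥ (T *ᵥ w) ≤ m ^ 2 * (w ⬝ᵥ w) := by
    intro w
    set t := T *ᵥ w with htdef
    set a := t ⬝ᵥ t with hadef
    set bb := w ⬝ᵥ w with hbbdef
    have ha0 : 0 ≤ a := dot_self_nonneg _
    have hb0 : 0 ≤ bb := dot_self_nonneg _
    have key : ∀ c : ℝ, 4 * (c * a) ≤ 2 * m * (c ^ 2 * bb + a) := by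
      intro c
      have h1 := Hnum (c • w + t)
      have h2 := Hnum (c • w - t)
      have cross : w ⬝ᵥ (T *ᵥ t) = a := by
        rw [dot_sym hTt, ← htdef, hadef]
      have cross2 : t ⬝ᵥ (T *ᵥ w) = a := by rw [← htdef, hadef]
      have e1 : T *ᵥ (c • w + t) = c • t + T *ᵥ t := by
        rw [mulVec_add, mulVec_smul, ← htdef]
      have e2 : T *ᵥ (c • w - t) = c • t - T *ᵥ t := by
        rw [mulVec_sub, mulVec_smul, ← htdef]
      rw [e1] at h1
      rw [e2] at h2
      simp only [dotProduct_add, add_dotProduct, dotProduct_sub, sub_dotProduct,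
        dotProduct_smul, smul_dotProduct, smul_eq_mul] at h1 h2
      rw [abs_le] at h1 h2
      have h1u := h1.2
      have h2l := h2.1
      rw [cross, cross2] at h1u h2l
      have hc1 : w ⬝ᵥ t = t ⬝ᵥ w := dotProduct_comm _ _
      nlinarith [h1u, h2l]
    rcases eq_or_lt_of_le ha0 with h | h
    · rw [← h]
      positivity
    · have hm : 0 < m := by
        rcases eq_or_lt_of_le hm0 with h' | h'
        · exfalso; have k := key 1; rw [← h'] at k; nlinarith
        · exact h'
      have hbb : 0 < bb := by
        rcases eq_or_lt_of_le hb0 with h' | h'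
        · exfalso; have k := key (2 * m); rw [← h'] at k; nlinarith
        · exact h'
      have hmb : 0 < m * bb := mul_pos hm hbb
      have k := key (a / (m * bb))
      have hc : a / (m * bb) * (m * bb) = a := div_mul_cancel₀ a hmb.ne'
      have hc2 : (a / (m * bb)) ^ 2 * (m * bb) ^ 2 = a ^ 2 := by
        rw [← mul_pow, hc]
      have k2 := mul_le_mul_of_nonneg_right k (le_of_lt hmb)
      nlinarith [k2, hc, hc2, h, hm, hbb]
  -- final assembly
  have hMu : M *ᵥ u = S *ᵥ (S *ᵥ u) := by rw [mulVec_mulVec, hSS]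
  set w := S *ᵥ u with hwdef
  have hSe1 : S *ᵥ (Nh *ᵥ b) = A *ᵥ w := by
    rw [← hu, hMu, hwdef, mulVec_mulVec, mulVec_mulVec, hAdef]
  have hSe2 : S *ᵥ (N *ᵥ b) = Q *ᵥ w := by
    rw [← hu, hMu, hwdef, mulVec_mulVec, mulVec_mulVec, hQdef]
  have hSe : S *ᵥ (Nh *ᵥ b - N *ᵥ b) = T *ᵥ w := by
    rw [hTdef, sub_mulVec, mulVec_sub, hSe1, hSe2]
  have lhsEq : (Nh *ᵥ b - N *ᵥ b) ⬝ᵥ (M *ᵥ (Nh *ᵥ b - N *ᵥ b)) = (T *ᵥ w) ⬝ᵥ (T *ᵥ w) := by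
    rw [← hSS, ← mulVec_mulVec, dot_sym hSt, hSe]
  have rhsEq : b ⬝ᵥ (N *ᵥ b) = w ⬝ᵥ w := by
    have e1 : w ⬝ᵥ w = u ⬝ᵥ (M *ᵥ u) := by
      rw [hwdef, ← dot_sym hSt, mulVec_mulVec, hSS]
    have e2 : b ⬝ᵥ (N *ᵥ b) = u ⬝ᵥ (M *ᵥ u) := by
      rw [← hu, dot_sym hMt, dotProduct_comm, dot_sym hMt, mulVec_mulVec, mulVec_mulVec, a1]
    rw [e1, e2]
  rw [lhsEq, rhsEq]
  calc Real.sqrt ((T *ᵥ w) ⬝ᵥ (T *ᵥ w)) ≤ Real.sqrt (m ^ 2 * (w ⬝ᵥ w)) :=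
        Real.sqrt_le_sqrt (opnorm w)
    _ = m * Real.sqrt (w ⬝ᵥ w) := by
        rw [Real.sqrt_mul (sq_nonneg m), Real.sqrt_sq hm0]
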